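/- The set of unmatched agents is the same across all stable matchings at a given preference profile: if μ and ν are both stable at a profile P, then for every agent a, μ(a) = ∅ if and only if ν(a) = ∅. -/

import Mathlib

/-- A one-to-one matching between men `M` and women `W`; `none` means unmatched. -/
structure Matching (M W : Type*) where
  menMatch : M → Option W
  womenMatch : W → Option M
  consistent : ∀ m w, menMatch m = some w ↔ womenMatch w = some m

/-- A preference profile: each man has a strict linear order over `W ∪ {∅}`
(encoded as `Option W`, with `none` the outside option), and each woman over `M ∪ {∅}`. -/
structure Profile (M W : Type*) where
  menPref : M → LinearOrder (Option W)
  womenPref : W → LinearOrder (Option M)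

variable {M W : Type*}

def IndividuallyRational (μ : Matching M W) (P : Profile M W) : Prop :=
  (∀ m, (P.menPref m).le none (μ.menMatch m)) ∧
  (∀ w, (P.womenPref w).le none (μ.womenMatch w))

def Blocks (m : M) (w : W) (μ : Matching M W) (P : Profile M W) : Prop :=
  (P.menPref m).lt (μ.menMatch m) (some w) ∧
  (P.womenPref w).lt (μ.womenMatch w) (some m)

def Stable (μ : Matching M W) (P : Profile M W) : Prop :=
  IndividuallyRational μ P ∧ ∀ m w, ¬ Blocks m w μ P

/-- The men-optimal stable matching: stable, and every man weakly prefers it to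
any stable matching.  This characterizes the outcome of the men-proposing
deferred acceptance (MPDA) algorithm. -/
def MenOptimalStable (μ : Matching M W) (P : Profile M W) : Prop :=
  Stable μ P ∧
    ∀ ν : Matching M W, Stable ν P → ∀ m, (P.menPref m).le (ν.menMatch m) (μ.menMatch m)

/-- The women-optimal stable matching, i.e. the outcome of women-proposing DA. -/
def WomenOptimalStable (μ : Matching M W) (P : Profile M W) : Prop :=
  Stable μ P ∧
    ∀ ν : Matching M W, Stable ν P → ∀ w, (P.womenPref w).le (ν.womenMatch w) (μ.womenMatch w)

def Matching.empty (M W : Type*) : Matching M W :=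
  ⟨fun _ => none, fun _ => none, by intro m w; simp⟩

/-- The men-proposing deferred acceptance rule `D^M`. -/
noncomputable def mpda (P : Profile M W) : Matching M W :=
  letI := Classical.dec (∃ μ : Matching M W, MenOptimalStable μ P)
  if h : ∃ μ : Matching M W, MenOptimalStable μ P then h.choose else Matching.empty M W

/-- The women-proposing deferred acceptance rule `D^W`. -/
noncomputable def wpda (P : Profile M W) : Matching M W :=
  letI := Classical.dec (∃ μ : Matching M W, WomenOptimalStable μ P)
  if h : ∃ μ : Matching M W, WomenOptimalStable μ P then h.choose else Matching.empty M W

/-- A domain of preference profiles: a set of admissible preferences for each agent. -/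
structure Domain (M W : Type*) where
  men : M → Set (LinearOrder (Option W))
  women : W → Set (LinearOrder (Option M))

/-- Membership of a profile in (the product domain generated by) a domain. -/
def Domain.mem (D : Domain M W) (P : Profile M W) : Prop :=
  (∀ m, P.menPref m ∈ D.men m) ∧ (∀ w, P.womenPref w ∈ D.women w)

def Profile.updateMan [DecidableEq M] (P : Profile M W) (m : M)
    (p : LinearOrder (Option W)) : Profile M W :=
  ⟨Function.update P.menPref m p, P.womenPref⟩

def Profile.updateWoman [DecidableEq W] (P : Profile M W) (w : W)
    (p : LinearOrder (Option M)) : Profile M W :=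
  ⟨P.menPref, Function.update P.womenPref w p⟩

/-- A matching rule is stable on a domain if it selects a stable matching at
every profile of the domain. -/
def StableOn (D : Domain M W) (φ : Profile M W → Matching M W) : Prop :=
  ∀ P, D.mem P → Stable (φ P) P

/-- Strategy-proofness on a domain: no single agent can strictly gain by
misreporting an admissible preference. -/
def StrategyProofOn [DecidableEq M] [DecidableEq W] (D : Domain M W)
    (φ : Profile M W → Matching M W) : Prop :=
  ∀ P, D.mem P →
    (∀ m p, p ∈ D.men m →
      (P.menPref m).le ((φ (P.updateMan m p)).menMatch m) ((φ P).menMatch m)) ∧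
    (∀ w p, p ∈ D.women w →
      (P.womenPref w).le ((φ (P.updateWoman w p)).womenMatch w) ((φ P).womenMatch w))

/-- A coalition `(Sm, Sw)` manipulates `φ` at `P` via the admissible profile `Q`
(which agrees with `P` outside the coalition): every coalition member is
strictly better off at `φ Q` than at `φ P` according to true preferences. -/
def Manipulation (D : Domain M W) (φ : Profile M W → Matching M W)
    (P Q : Profile M W) (Sm : Set M) (Sw : Set W) : Prop :=
  D.mem P ∧ D.mem Q ∧
  (∀ m ∉ Sm, Q.menPref m = P.menPref m) ∧
  (∀ w ∉ Sw, Q.womenPref w = P.womenPref w) ∧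
  (∀ m ∈ Sm, (P.menPref m).lt ((φ P).menMatch m) ((φ Q).menMatch m)) ∧
  (∀ w ∈ Sw, (P.womenPref w).lt ((φ P).womenMatch w) ((φ Q).womenMatch w))

/-- Group strategy-proofness on a domain: no nonempty coalition can manipulate. -/
def GroupStrategyProofOn (D : Domain M W) (φ : Profile M W → Matching M W) : Prop :=
  ¬ ∃ (P Q : Profile M W) (Sm : Set M) (Sw : Set W),
      (Sm.Nonempty ∨ Sw.Nonempty) ∧ Manipulation D φ P Q Sm Sw

/-- Top dominance for women. -/
def TopDominanceWomen (D : Domain M W) : Prop :=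
  ∀ w : W, ∀ x : M, ∀ y z : Option M,
    (∃ P ∈ D.women w, P.lt y (some x) ∧ P.lt z y ∧ P.le none y) →
      ¬ ∃ P' ∈ D.women w, P'.lt z (some x) ∧ P'.lt y z ∧ P'.le none z

/-- Top dominance for men. -/
def TopDominanceMen (D : Domain M W) : Prop :=
  ∀ m : M, ∀ x : W, ∀ y z : Option W,
    (∃ P ∈ D.men m, P.lt y (some x) ∧ P.lt z y ∧ P.le none y) →
      ¬ ∃ P' ∈ D.men m, P'.lt z (some x) ∧ P'.lt y z ∧ P'.le none z

/-- Unrestricted top pairs for men. -/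
def UnrestrictedTopPairsMen (D : Domain M W) : Prop :=
  ∀ m : M,
    (∀ w w' : W, w ≠ w' → ∃ P ∈ D.men m, P.lt (some w') (some w) ∧
        ∀ z : Option W, z ≠ some w → z ≠ some w' → P.lt z (some w')) ∧
    (∀ w : W, ∃ P ∈ D.men m, P.lt none (some w) ∧
        ∀ z : Option W, z ≠ some w → z ≠ none → P.lt z none) ∧
    (∃ P ∈ D.men m, ∀ z : Option W, z ≠ none → P.lt z none)

/-- Unrestricted top pairs for women. -/
def UnrestrictedTopPairsWomen (D : Domain M W) : Prop :=
  ∀ w : W,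
    (∀ m m' : M, m ≠ m' → ∃ P ∈ D.women w, P.lt (some m') (some m) ∧
        ∀ z : Option M, z ≠ some m → z ≠ some m' → P.lt z (some m')) ∧
    (∀ m : M, ∃ P ∈ D.women w, P.lt none (some m) ∧
        ∀ z : Option M, z ≠ some m → z ≠ none → P.lt z none) ∧
    (∃ P ∈ D.women w, ∀ z : Option M, z ≠ none → P.lt z none)

/-- Single-peakedness of a preference over `Option α` with respect to a prior
order `ord` on `α`:  moving away from the peak (the most preferred element of
`α`) on either side makes the preference decline. -/
def SinglePeaked {α : Type*} (ord : LinearOrder α) (P : LinearOrder (Option α)) : Prop :=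
  ∀ peak : α, (∀ a : α, P.le (some a) (some peak)) →
    ∀ a b : α, ((ord.le peak a ∧ ord.lt a b) ∨ (ord.lt b a ∧ ord.le a peak)) →
      P.lt (some b) (some a)

/-- The maximal single-peaked domain with respect to orders on men and women. -/
def maximalSinglePeakedDomain (ordM : LinearOrder M) (ordW : LinearOrder W) : Domain M W :=
  ⟨fun _ => {P | SinglePeaked ordW P}, fun _ => {P | SinglePeaked ordM P}⟩

/-- A domain is single-peaked if all admissible preferences are single-peaked. -/
def Domain.SinglePeakedDomain (D : Domain M W) (ordM : LinearOrder M)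
    (ordW : LinearOrder W) : Prop :=
  (∀ m, ∀ P ∈ D.men m, SinglePeaked ordW P) ∧ (∀ w, ∀ P ∈ D.women w, SinglePeaked ordM P)

/-- Anonymity: all men share the same admissible set, and all women do too. -/
def Domain.Anonymous (D : Domain M W) : Prop :=
  (∀ m m' : M, D.men m = D.men m') ∧ (∀ w w' : W, D.women w = D.women w')

/-- Cyclical inclusion for men. -/
def CyclicalInclusionMen (D : Domain M W) : Prop :=
  ∀ m : M,
    (∃ P ∈ D.men m, ∀ z : Option W, z ≠ none → P.lt z none) ∧
    (∀ w w' : W,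
      (∃ P ∈ D.men m, P.lt (some w') (some w) ∧ P.lt none (some w')) →
      (∃ P ∈ D.men m, P.lt (some w) (some w') ∧ P.lt none (some w)))

/-- Cyclical inclusion for women. -/
def CyclicalInclusionWomen (D : Domain M W) : Prop :=
  ∀ w : W,
    (∃ P ∈ D.women w, ∀ z : Option M, z ≠ none → P.lt z none) ∧
    (∀ m m' : M,
      (∃ P ∈ D.women w, P.lt (some m') (some m) ∧ P.lt none (some m')) →
      (∃ P ∈ D.women w, P.lt (some m) (some m') ∧ P.lt none (some m)))

/-- The unrestricted domain: every strict linear order is admissible. -/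
def fullDomain (M W : Type*) : Domain M W :=
  ⟨fun _ => Set.univ, fun _ => Set.univ⟩


section LoneWolfAux

private lemma lo_lt_of_le_of_ne {α : Type*} (L : LinearOrder α) {a b : α}
    (h : L.le a b) (h2 : a ≠ b) : L.lt a b := by
  letI := L; exact lt_of_le_of_ne h h2

private lemma lo_le_of_not_lt {α : Type*} (L : LinearOrder α) {a b : α}
    (h : ¬ L.lt a b) : L.le b a := by
  letI := L; exact le_of_not_gt h

private lemma lo_lt_of_lt_of_le {α : Type*} (L : LinearOrder α) {a b c : α}
    (h : L.lt a b) (h2 : L.le b c) : L.lt a c := by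
  letI := L; exact lt_of_lt_of_le h h2

private lemma lo_lt_irrefl {α : Type*} (L : LinearOrder α) {a : α}
    (h : L.lt a a) : False := by
  letI := L; exact lt_irrefl a h

private lemma lo_ne_of_lt {α : Type*} (L : LinearOrder α) {a b : α}
    (h : L.lt a b) : a ≠ b := by
  letI := L; exact ne_of_lt h

/-- Key lemma: a man unmatched in one stable matching is unmatched in every
stable matching. -/
private lemma lone_wolf_men [Finite M] (P : Profile M W)
    (mu nu : Matching M W) (hmu : Stable mu P) (hnu : Stable nu P)
    (m0 : M) (h0 : nu.menMatch m0 = none) : mu.menMatch m0 = none := by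
  by_contra hne
  obtain ⟨⟨hmuIRm, hmuIRw⟩, hmuNB⟩ := hmu
  obtain ⟨⟨hnuIRm, hnuIRw⟩, hnuNB⟩ := hnu
  -- invariant: m is matched in mu to someone strictly better than nu's match
  set Q : M → Prop := fun m => ∃ w, mu.menMatch m = some w ∧
    (P.menPref m).lt (nu.menMatch m) (some w) with hQ
  have hQ0 : Q m0 := by
    obtain ⟨w0, hw0⟩ := Option.ne_none_iff_exists'.mp hne
    exact ⟨w0, hw0, by
      rw [h0]
      exact lo_lt_of_le_of_ne _ (hw0 ▸ hmuIRm m0) (by simp)⟩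
  -- step: from a man satisfying Q, produce the nu-partner of his mu-wife,
  -- who again satisfies Q
  have step : ∀ m, Q m → ∃ m', Q m' ∧ nu.menMatch m' = mu.menMatch m := by
    rintro m ⟨w, hmw, hlt⟩
    have hwm : mu.womenMatch w = some m := (mu.consistent m w).mp hmw
    -- (m, w) does not block nu
    have hnb := hnuNB m w
    rw [Blocks] at hnb
    have hle : (P.womenPref w).le (some m) (nu.womenMatch w) :=
      lo_le_of_not_lt _ (fun hc => hnb ⟨hlt, hc⟩)
    have hmn : (P.womenPref w).lt none (some m) :=
      lo_lt_of_le_of_ne _ (hwm ▸ hmuIRw w) (by simp)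
    have hnuw_ne : nu.womenMatch w ≠ none := by
      intro hc
      exact lo_lt_irrefl _ (lo_lt_of_lt_of_le _ hmn (hc ▸ hle))
    obtain ⟨m', hm'⟩ := Option.ne_none_iff_exists'.mp hnuw_ne
    have hm'w : nu.menMatch m' = some w := (nu.consistent m' w).mpr hm'
    have hm'ne : m' ≠ m := by
      intro hc
      subst hc
      rw [hm'w] at hlt
      exact lo_lt_irrefl _ hlt
    have hlt2 : (P.womenPref w).lt (some m) (some m') := by
      rw [hm'] at hle
      exact lo_lt_of_le_of_ne _ hle (by simp [hm'ne.symm])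
    -- (m', w) does not block mu
    have hnb2 := hmuNB m' w
    rw [Blocks] at hnb2
    have hle2 : (P.menPref m').le (some w) (mu.menMatch m') :=
      lo_le_of_not_lt _ (fun hc => hnb2 ⟨hc, hwm ▸ hlt2⟩)
    have hwn : (P.menPref m').lt none (some w) :=
      lo_lt_of_le_of_ne _ (hm'w ▸ hnuIRm m') (by simp)
    have hmum'_ne : mu.menMatch m' ≠ none := by
      intro hc
      exact lo_lt_irrefl _ (lo_lt_of_lt_of_le _ hwn (hc ▸ hle2))
    obtain ⟨w', hw'⟩ := Option.ne_none_iff_exists'.mp hmum'_ne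
    have hww' : w ≠ w' := by
      intro hc
      subst hc
      rw [(mu.consistent m' w).mp hw'] at hwm
      exact hm'ne (by injection hwm)
    refine ⟨m', ⟨w', hw', ?_⟩, by rw [hm'w, hmw]⟩
    rw [hm'w]
    rw [hw'] at hle2
    exact lo_lt_of_le_of_ne _ hle2 (by simp [hww'])
  -- build the infinite sequence
  let S := {m : M // Q m}
  let g : S → S := fun x => ⟨(step x.1 x.2).choose, (step x.1 x.2).choose_spec.1⟩
  have hrel : ∀ x : S, nu.menMatch (g x).1 = mu.menMatch x.1 := fun x =>
    (step x.1 x.2).choose_spec.2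
  let f : ℕ → M := fun n => (g^[n] ⟨m0, hQ0⟩).1
  -- backward injectivity
  have hback : ∀ x y : S, (g x).1 = (g y).1 → x.1 = y.1 := by
    intro x y hxy
    obtain ⟨wx, hwx, -⟩ := x.2
    obtain ⟨wy, hwy, -⟩ := y.2
    have h1 : nu.menMatch (g x).1 = some wx := by rw [hrel x, hwx]
    have h2 : nu.menMatch (g y).1 = some wy := by rw [hrel y, hwy]
    rw [hxy, h2] at h1
    injection h1 with h1
    rw [h1] at hwy
    have := ((mu.consistent x.1 wx).mp hwx).symm.trans ((mu.consistent y.1 wx).mp hwy)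
    injection this
  -- the sequence never returns to m0
  have hnever : ∀ x : S, (g x).1 ≠ m0 := by
    intro x hc
    obtain ⟨wx, hwx, -⟩ := x.2
    have : nu.menMatch (g x).1 = some wx := by rw [hrel x, hwx]
    rw [hc, h0] at this
    exact nomatch this
  have hclaim : ∀ i d, f i = f (i + d) → f 0 = f d := by
    intro i
    induction i with
    | zero => intro d h; simpa using h
    | succ i ih =>
      intro d h
      have e1 : f (i + 1) = (g (g^[i] ⟨m0, hQ0⟩)).1 := by
        show (g^[i + 1] ⟨m0, hQ0⟩).1 = _
        rw [Function.iterate_succ_apply']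
      have e2 : f (i + 1 + d) = (g (g^[i + d] ⟨m0, hQ0⟩)).1 := by
        show (g^[i + 1 + d] ⟨m0, hQ0⟩).1 = _
        rw [show i + 1 + d = (i + d) + 1 by omega, Function.iterate_succ_apply']
      rw [e1, e2] at h
      exact ih d (hback _ _ h)
  have hfne : ∀ d, f 0 ≠ f (d + 1) := by
    intro d hc
    exact hnever (g^[d] ⟨m0, hQ0⟩)
      (by rw [← Function.iterate_succ_apply' g]; exact hc.symm)
  obtain ⟨i, j, hij, hfij⟩ := Finite.exists_ne_map_eq_of_infinite f
  rcases hij.lt_or_gt with h | h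
  · obtain ⟨d, rfl⟩ : ∃ d, j = i + (d + 1) := ⟨j - i - 1, by omega⟩
    exact hfne _ (hclaim i (d + 1) hfij)
  · obtain ⟨d, rfl⟩ : ∃ d, i = j + (d + 1) := ⟨i - j - 1, by omega⟩
    exact hfne _ (hclaim j (d + 1) hfij.symm)

/-- Dualize a matching, swapping the roles of men and women. -/
private def Matching.dual (μ : Matching M W) : Matching W M :=
  ⟨μ.womenMatch, μ.menMatch, fun w m => (μ.consistent m w).symm⟩

/-- Dualize a profile. -/
private def Profile.dual (P : Profile M W) : Profile W M :=
  ⟨P.womenPref, P.menPref⟩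

private lemma Stable.dual {μ : Matching M W} {P : Profile M W}
    (h : Stable μ P) : Stable μ.dual P.dual := by
  obtain ⟨⟨h1, h2⟩, h3⟩ := h
  exact ⟨⟨h2, h1⟩, fun w m hb => h3 m w ⟨hb.2, hb.1⟩⟩

end LoneWolfAux

/-- the set of unmatched agents is the same across all stable
matchings at a given profile (McVitie-Wilson lone wolf theorem). -/
theorem lone_wolf [Fintype M] [Fintype W] (P : Profile M W)
    (mu nu : Matching M W) (hmu : Stable mu P) (hnu : Stable nu P) :
    (∀ m : M, mu.menMatch m = none ↔ nu.menMatch m = none) ∧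
    (∀ w : W, mu.womenMatch w = none ↔ nu.womenMatch w = none) := by
  constructor
  · intro m
    exact ⟨fun h => lone_wolf_men P nu mu hnu hmu m h,
           fun h => lone_wolf_men P mu nu hmu hnu m h⟩
  · intro w
    exact ⟨fun h => lone_wolf_men P.dual nu.dual mu.dual hnu.dual hmu.dual w h,
           fun h => lone_wolf_men P.dual mu.dual nu.dual hmu.dual hnu.dual w h⟩
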